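/- Let Q_8 be the quaternion group of order 8. Then the Boolean lattice B(2) is embeddable both as a meet-semilattice and as a join-semilattice in the subgroup lattice of Q_8, but B(2) is not embeddable as a lattice: there is no injective map f from the subsets of {1,2} to the subgroups of Q_8 with f(∅) the trivial subgroup, f({1,2}) = Q_8, f({1,2}) the subgroup generated by f({1}) and f({2}), and f(∅) = f({1}) ∩ f({2}); equivalently, there are no nontrivial proper subgroups A, B of Q_8 with A ∩ B trivial and ⟨A, B⟩ = Q_8. -/

import Mathlib

/-- A base: the pointwise stabiliser of the sequence equals the kernel of the action. -/
def IsBase (G : Type) [Group G] {Ω : Type} [MulAction G Ω] {k : ℕ} (b : Fin k → Ω) : Prop :=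
  ∀ g : G, (∀ i, g • b i = b i) → ∀ ω : Ω, g • ω = ω

/-- Irredundant: no point is fixed by the pointwise stabiliser of its predecessors. -/
def IsIrredundant (G : Type) [Group G] {Ω : Type} [MulAction G Ω] {k : ℕ} (b : Fin k → Ω) : Prop :=
  ∀ i : Fin k, ∃ g : G, (∀ j, j < i → g • b j = b j) ∧ g • b i ≠ b i

/-- Minimal: no point is fixed by the pointwise stabiliser of the other points. -/
def IsMinimal (G : Type) [Group G] {Ω : Type} [MulAction G Ω] {k : ℕ} (b : Fin k → Ω) : Prop :=
  ∀ i : Fin k, ∃ g : G, (∀ j, j ≠ i → g • b j = b j) ∧ g • b i ≠ b i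

noncomputable def b1 (G : Type) [Group G] : ℕ :=
  sSup {k | ∃ (Ω : Type) (_ : Finite Ω) (m : MulAction G Ω), ∃ b : Fin k → Ω,
    @IsBase G _ Ω m k b ∧ @IsIrredundant G _ Ω m k b}

noncomputable def b2 (G : Type) [Group G] : ℕ :=
  sSup {k | ∃ (Ω : Type) (_ : Finite Ω) (m : MulAction G Ω), ∃ b : Fin k → Ω,
    @IsBase G _ Ω m k b ∧ @IsMinimal G _ Ω m k b}

noncomputable def minBaseSize (G : Type) [Group G] (Ω : Type) [MulAction G Ω] : ℕ :=
  sInf {k | ∃ b : Fin k → Ω, IsBase G b}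

noncomputable def b3 (G : Type) [Group G] : ℕ :=
  sSup {k | ∃ (Ω : Type) (_ : Finite Ω) (m : MulAction G Ω), k = @minBaseSize G _ Ω m}

/-- The length of the longest chain of subgroups of `G`. -/
noncomputable def subgroupChainLength (G : Type) [Group G] : ℕ :=
  sSup {l | ∃ c : Fin (l + 1) → Subgroup G, StrictAnti c ∧ c 0 = ⊤ ∧ c (Fin.last l) = ⊥}

def IsFaithfulAction (G Ω : Type) [Group G] [MulAction G Ω] : Prop :=
  ∀ g : G, (∀ ω : Ω, g • ω = ω) → g = 1

def IsTransitiveAction (G Ω : Type) [Group G] [MulAction G Ω] : Prop :=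
  ∀ x y : Ω, ∃ g : G, g • x = y

def IsPrimitiveAction (G Ω : Type) [Group G] [MulAction G Ω] : Prop :=
  IsTransitiveAction G Ω ∧ Nontrivial Ω ∧
    ∀ r : Setoid Ω, (∀ (g : G) (x y : Ω), r.r x y → r.r (g • x) (g • y)) → r = ⊥ ∨ r = ⊤

def IsIndependent (G : Type) [Group G] (S : Finset G) : Prop :=
  ∀ g ∈ S, g ∉ Subgroup.closure ((S : Set G) \ {g})

noncomputable def maxIndependent (G : Type) [Group G] : ℕ :=
  sSup {n | ∃ S : Finset G, S.card = n ∧ IsIndependent G S}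

def IsJoinEmbedding (G : Type) [Group G] (n : ℕ) (f : Finset (Fin n) → Subgroup G) : Prop :=
  Function.Injective f ∧ f ∅ = ⊥ ∧ ∀ I J, f (I ∪ J) = f I ⊔ f J

def IsMeetEmbedding (G : Type) [Group G] (n : ℕ) (f : Finset (Fin n) → Subgroup G) : Prop :=
  Function.Injective f ∧ f ∅ = ⊤ ∧ ∀ I J, f (I ∪ J) = f I ⊓ f J


section Q8aux
open QuaternionGroup Subgroup


private abbrev QA : Subgroup (QuaternionGroup 2) := zpowers (a 1)
private abbrev QB : Subgroup (QuaternionGroup 2) := zpowers (xa 0)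

private lemma q_memA {x : QuaternionGroup 2} (h : x ∈ QA) : ∃ k : ZMod 4, x = a k := by
  rw [← mem_powers_iff_mem_zpowers] at h
  obtain ⟨n, hn⟩ := h
  exact ⟨n, by rw [← hn]; exact (a_one_pow n)⟩

private lemma q_a_mem (j : ZMod 4) : (a j : QuaternionGroup 2) ∈ QA := by
  rw [← mem_powers_iff_mem_zpowers]
  exact ⟨j.val, by simp only []; rw [a_one_pow, ZMod.natCast_zmod_val]⟩

private lemma q_notmemB : (a 1 : QuaternionGroup 2) ∉ QB := by
  rw [← mem_powers_iff_mem_zpowers]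
  rintro ⟨n, hn⟩
  simp only at hn
  rw [← Nat.mod_add_div n 4, pow_add, pow_mul, xa_pow_four, one_pow, mul_one] at hn
  have h4 : n % 4 < 4 := Nat.mod_lt _ (by norm_num)
  interval_cases h : n % 4 <;> revert hn <;> decide

private lemma q_xa_notmemA : (xa 0 : QuaternionGroup 2) ∉ QA := by
  intro h
  obtain ⟨k, hk⟩ := q_memA h
  cases hk

private lemma q_sup : QA ⊔ QB = ⊤ := by
  rw [eq_top_iff]
  rintro (k | k) -
  · exact mem_sup_left (q_a_mem k)
  · have hx : (xa k : QuaternionGroup 2) = a (-k) * xa 0 := by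
      rw [a_mul_xa]; congr 1; ring
    rw [hx]
    exact mul_mem (mem_sup_left (q_a_mem _)) (mem_sup_right (mem_zpowers _))

private lemma q_A_ne_top : QA ≠ ⊤ := fun h => q_xa_notmemA (h ▸ mem_top _)
private lemma q_B_ne_top : QB ≠ ⊤ := fun h => q_notmemB (h ▸ mem_top _)
private lemma q_A_ne_B : QA ≠ QB := fun h => q_notmemB (h ▸ mem_zpowers _)
private lemma q_M_ne_A : QA ⊓ QB ≠ QA := fun h =>
  q_notmemB ((h.symm ▸ mem_zpowers _ : a 1 ∈ QA ⊓ QB)).2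
private lemma q_M_ne_B : QA ⊓ QB ≠ QB := fun h =>
  q_xa_notmemA ((h.symm ▸ mem_zpowers _ : xa 0 ∈ QA ⊓ QB)).1
private lemma q_M_ne_top : QA ⊓ QB ≠ ⊤ := fun h =>
  q_notmemB ((h ▸ mem_top _ : a 1 ∈ QA ⊓ QB)).2
private lemma q_A_ne_bot : QA ≠ ⊥ := by
  intro h
  have : (a 1 : QuaternionGroup 2) ∈ QA := mem_zpowers _
  rw [h, mem_bot] at this
  exact (by decide : (a 1 : QuaternionGroup 2) ≠ 1) this
private lemma q_B_ne_bot : QB ≠ ⊥ := by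
  intro h
  have : (xa 0 : QuaternionGroup 2) ∈ QB := mem_zpowers _
  rw [h, mem_bot] at this
  exact (by decide : (xa 0 : QuaternionGroup 2) ≠ 1) this

/-- every pair of nontrivial subgroups of Q8 intersects nontrivially -/
private lemma q_inf_ne_bot (A B : Subgroup (QuaternionGroup 2)) (hA : A ≠ ⊥) (hB : B ≠ ⊥) :
    A ⊓ B ≠ ⊥ := by
  have key : ∀ x : QuaternionGroup 2, x ≠ 1 → x = a 2 ∨ x * x = a 2 := by decide
  have mem2 : ∀ H : Subgroup (QuaternionGroup 2), H ≠ ⊥ → (a 2 : QuaternionGroup 2) ∈ H := by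
    intro H hH
    obtain ⟨⟨x, hxH⟩, hx1⟩ := Subgroup.ne_bot_iff_exists_ne_one.mp hH
    have hx1' : x ≠ 1 := by simpa [Subtype.ext_iff] using hx1
    rcases key x hx1' with h | h
    · exact h ▸ hxH
    · exact h ▸ mul_mem hxH hxH
  intro h
  have := h ▸ (Subgroup.mem_inf.mpr ⟨mem2 A hA, mem2 B hB⟩)
  rw [mem_bot] at this
  exact (by decide : (a 2 : QuaternionGroup 2) ≠ 1) this


end Q8aux

open QuaternionGroup Subgroup in
/-- B(2) embeds in the subgroup lattice of Q_8 both as a meet-semilattice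
and as a join-semilattice, but not as a lattice: there is no injective f with f(∅) = ⊥,
f({1,2}) = Q_8, f({1,2}) = ⟨f({1}), f({2})⟩ and f(∅) = f({1}) ∩ f({2}); equivalently there
are no nontrivial proper subgroups A, B with A ∩ B trivial and ⟨A, B⟩ = Q_8. -/
theorem quaternion_boolean_semilattices :
    (∃ f : Finset (Fin 2) → Subgroup (QuaternionGroup 2), IsMeetEmbedding (QuaternionGroup 2) 2 f) ∧
    (∃ f : Finset (Fin 2) → Subgroup (QuaternionGroup 2), IsJoinEmbedding (QuaternionGroup 2) 2 f) ∧
    ¬ (∃ f : Finset (Fin 2) → Subgroup (QuaternionGroup 2), Function.Injective f ∧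
        f ∅ = ⊥ ∧ f Finset.univ = ⊤ ∧ f Finset.univ = f {0} ⊔ f {1} ∧ f ∅ = f {0} ⊓ f {1}) ∧
    ¬ (∃ A B : Subgroup (QuaternionGroup 2), A ≠ ⊥ ∧ A ≠ ⊤ ∧ B ≠ ⊥ ∧ B ≠ ⊤ ∧
        A ⊓ B = ⊥ ∧ A ⊔ B = ⊤) := by
  
  refine ⟨?_, ?_, ?_, ?_⟩
  · -- meet embedding
    refine ⟨fun I => if (0 : Fin 2) ∈ I then (if (1 : Fin 2) ∈ I then QA ⊓ QB else QA)
      else (if (1 : Fin 2) ∈ I then QB else ⊤), ?_, ?_, ?_⟩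
    · intro I J h
      by_cases h0I : (0 : Fin 2) ∈ I <;> by_cases h1I : (1 : Fin 2) ∈ I <;>
        by_cases h0J : (0 : Fin 2) ∈ J <;> by_cases h1J : (1 : Fin 2) ∈ J <;>
        simp only [h0I, h1I, h0J, h1J, if_true, if_false] at h <;>
        first
          | exact absurd h q_M_ne_A | exact absurd h.symm q_M_ne_A
          | exact absurd h q_M_ne_B | exact absurd h.symm q_M_ne_B
          | exact absurd h q_M_ne_top | exact absurd h.symm q_M_ne_top
          | exact absurd h q_A_ne_B | exact absurd h.symm q_A_ne_B
          | exact absurd h q_A_ne_top | exact absurd h.symm q_A_ne_top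
          | exact absurd h q_B_ne_top | exact absurd h.symm q_B_ne_top
          | (ext x; fin_cases x <;> simp [h0I, h1I, h0J, h1J])
    · simp
    · intro I J
      by_cases h0I : (0 : Fin 2) ∈ I <;> by_cases h1I : (1 : Fin 2) ∈ I <;>
        by_cases h0J : (0 : Fin 2) ∈ J <;> by_cases h1J : (1 : Fin 2) ∈ J <;>
        simp [Finset.mem_union, h0I, h1I, h0J, h1J, inf_comm, inf_assoc, inf_left_comm]
  · -- join embedding
    refine ⟨fun I => if (0 : Fin 2) ∈ I then (if (1 : Fin 2) ∈ I then ⊤ else QA)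
      else (if (1 : Fin 2) ∈ I then QB else ⊥), ?_, ?_, ?_⟩
    · intro I J h
      by_cases h0I : (0 : Fin 2) ∈ I <;> by_cases h1I : (1 : Fin 2) ∈ I <;>
        by_cases h0J : (0 : Fin 2) ∈ J <;> by_cases h1J : (1 : Fin 2) ∈ J <;>
        simp only [h0I, h1I, h0J, h1J, if_true, if_false] at h <;>
        first
          | exact absurd h q_A_ne_B | exact absurd h.symm q_A_ne_B
          | exact absurd h q_A_ne_top | exact absurd h.symm q_A_ne_top
          | exact absurd h q_B_ne_top | exact absurd h.symm q_B_ne_top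
          | exact absurd h q_A_ne_bot | exact absurd h.symm q_A_ne_bot
          | exact absurd h q_B_ne_bot | exact absurd h.symm q_B_ne_bot
          | exact absurd h bot_ne_top | exact absurd h.symm bot_ne_top
          | (ext x; fin_cases x <;> simp [h0I, h1I, h0J, h1J])
    · simp
    · intro I J
      by_cases h0I : (0 : Fin 2) ∈ I <;> by_cases h1I : (1 : Fin 2) ∈ I <;>
        by_cases h0J : (0 : Fin 2) ∈ J <;> by_cases h1J : (1 : Fin 2) ∈ J <;>
        simp [Finset.mem_union, h0I, h1I, h0J, h1J, q_sup, sup_comm, sup_assoc, sup_left_comm]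
  · -- no lattice embedding
    rintro ⟨f, hinj, hbot, -, -, hmeet⟩
    have h0 : f {0} ≠ ⊥ := by
      rw [← hbot]; exact fun h => (by decide : ({0} : Finset (Fin 2)) ≠ ∅) (hinj h)
    have h1 : f {1} ≠ ⊥ := by
      rw [← hbot]; exact fun h => (by decide : ({1} : Finset (Fin 2)) ≠ ∅) (hinj h)
    exact q_inf_ne_bot _ _ h0 h1 (hmeet.symm.trans hbot)
  · rintro ⟨A, B, hA, -, hB, -, hAB, -⟩
    exact q_inf_ne_bot A B hA hB hAB
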